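/- Let b > 0 and let Ψ : ℝ × ℝ → ℝ be continuous on [−b,b] × [−1,1] with continuous partial derivative ∂ₓΨ on [−b,b] × [−1,1], satisfying Ψ(b,μ) = 0 for all μ ∈ [−1,0] and Ψ(−b,μ) = 0 for all μ ∈ [0,1]. Let Σ_t : ℝ → ℝ be continuous on [−b,b] and let σ_* > 0 satisfy Σ_t(x) ≥ σ_* for all x ∈ [−b,b]. Then ∫_{−1}^{1} ∫_{−b}^{b} (μ ∂ₓΨ(x,μ) + Σ_t(x)Ψ(x,μ)) Ψ(x,μ) dx dμ ≥ σ_* ∫_{−1}^{1} ∫_{−b}^{b} Ψ(x,μ)² dx dμ. -/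

import Mathlib

open Set

lemma extend_cont {X : Type*} [TopologicalSpace X] [NormalSpace X] {s : Set X}
    (hs : IsClosed s) {f : X → ℝ} (hf : ContinuousOn f s) :
    ∃ g : X → ℝ, Continuous g ∧ ∀ p ∈ s, g p = f p := by
  obtain ⟨g, hg⟩ := ContinuousMap.exists_restrict_eq (Y := ℝ) hs
    ⟨s.restrict f, continuousOn_iff_continuous_restrict.1 hf⟩
  refine ⟨g, g.continuous, fun p hp => ?_⟩
  have := congrFun (congrArg DFunLike.coe hg) ⟨p, hp⟩
  exact this

/-- Coercivity of the 1D slab streaming–absorption operator under the vacuum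
boundary condition: `(𝒟Ψ,Ψ) ≥ σ_* ‖Ψ‖₀²`. -/
theorem transport_coercivity_slab
    (b : ℝ) (hb : 0 < b) (Ψ Ψx : ℝ → ℝ → ℝ) (sigmaT : ℝ → ℝ) (σstar : ℝ)
    (hΨ : ContinuousOn (fun p : ℝ × ℝ => Ψ p.1 p.2) (Icc (-b) b ×ˢ Icc (-1) 1))
    (hΨx : ContinuousOn (fun p : ℝ × ℝ => Ψx p.1 p.2) (Icc (-b) b ×ˢ Icc (-1) 1))
    (hderiv : ∀ μ ∈ Icc (-1 : ℝ) 1, ∀ x ∈ Icc (-b) b,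
      HasDerivWithinAt (fun t => Ψ t μ) (Ψx x μ) (Icc (-b) b) x)
    (hsigmaT : ContinuousOn sigmaT (Icc (-b) b))
    (hσstar : 0 < σstar)
    (hlow : ∀ x ∈ Icc (-b) b, σstar ≤ sigmaT x)
    (hin₁ : ∀ μ ∈ Icc (-1 : ℝ) 0, Ψ b μ = 0)
    (hin₂ : ∀ μ ∈ Icc (0 : ℝ) 1, Ψ (-b) μ = 0) :
    σstar * ∫ μ in (-1 : ℝ)..1, ∫ x in (-b)..b, (Ψ x μ) ^ 2
      ≤ ∫ μ in (-1 : ℝ)..1, ∫ x in (-b)..b,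
          (μ * Ψx x μ + sigmaT x * Ψ x μ) * Ψ x μ := by
  have hbb : (-b : ℝ) ≤ b := by linarith
  have h11 : (-1 : ℝ) ≤ 1 := by norm_num
  have hS : IsClosed (Icc (-b) b ×ˢ Icc (-1 : ℝ) 1) := isClosed_Icc.prod isClosed_Icc
  obtain ⟨G, hG, hGeq⟩ := extend_cont hS hΨ
  obtain ⟨Gx, hGx, hGxeq⟩ := extend_cont hS hΨx
  obtain ⟨σ', hσ', hσ'eq⟩ := extend_cont (isClosed_Icc : IsClosed (Icc (-b) b)) hsigmaT
  -- parameterized integrals with extended integrands, parameter μ first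
  set F : ℝ → ℝ := fun μ => ∫ x in (-b)..b, (μ * Gx (x, μ) + σ' x * G (x, μ)) * G (x, μ)
    with hF
  set K : ℝ → ℝ := fun μ => ∫ x in (-b)..b, (G (x, μ)) ^ 2 with hK
  have hFc : Continuous F := by
    apply intervalIntegral.continuous_parametric_intervalIntegral_of_continuous'
      (f := fun μ x => (μ * Gx (x, μ) + σ' x * G (x, μ)) * G (x, μ))
    have : Continuous fun p : ℝ × ℝ => (p.1 * Gx (p.2, p.1) + σ' p.2 * G (p.2, p.1)) * G (p.2, p.1) := by
      fun_prop
    exact this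
  have hKc : Continuous K := by
    apply intervalIntegral.continuous_parametric_intervalIntegral_of_continuous'
      (f := fun μ x => (G (x, μ)) ^ 2)
    have : Continuous fun p : ℝ × ℝ => (G (p.2, p.1)) ^ 2 := by fun_prop
    exact this
  -- rewrite goal integrands via F and K
  have hKeq : ∀ μ ∈ Icc (-1 : ℝ) 1, K μ = ∫ x in (-b)..b, (Ψ x μ) ^ 2 := by
    intro μ hμ
    apply intervalIntegral.integral_congr
    intro x hx
    rw [uIcc_of_le hbb] at hx
    simp [hGeq (x, μ) ⟨hx, hμ⟩]
  have hFeq : ∀ μ ∈ Icc (-1 : ℝ) 1,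
      F μ = ∫ x in (-b)..b, (μ * Ψx x μ + sigmaT x * Ψ x μ) * Ψ x μ := by
    intro μ hμ
    apply intervalIntegral.integral_congr
    intro x hx
    rw [uIcc_of_le hbb] at hx
    simp [hGeq (x, μ) ⟨hx, hμ⟩, hGxeq (x, μ) ⟨hx, hμ⟩, hσ'eq x hx]
  -- pointwise in μ inequality
  have key : ∀ μ ∈ Icc (-1 : ℝ) 1, σstar * K μ ≤ F μ := by
    intro μ hμ
    -- continuity of slices
    have hcx : ContinuousOn (fun x => Ψ x μ) (Icc (-b) b) := by
      have : ContinuousOn (fun x : ℝ => (Ψ ((x, μ) : ℝ × ℝ).1 ((x, μ) : ℝ × ℝ).2)) (Icc (-b) b) :=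
        hΨ.comp (Continuous.continuousOn (by fun_prop)) (fun x hx => ⟨hx, hμ⟩)
      exact this
    have hcx' : ContinuousOn (fun x => Ψx x μ) (Icc (-b) b) := by
      have : ContinuousOn (fun x : ℝ => (Ψx ((x, μ) : ℝ × ℝ).1 ((x, μ) : ℝ × ℝ).2)) (Icc (-b) b) :=
        hΨx.comp (Continuous.continuousOn (by fun_prop)) (fun x hx => ⟨hx, hμ⟩)
      exact this
    have int1 : IntervalIntegrable (fun x => Ψx x μ * Ψ x μ) MeasureTheory.volume (-b) b :=
      (ContinuousOn.intervalIntegrable (by rw [uIcc_of_le hbb]; exact hcx'.mul hcx))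
    have int2 : IntervalIntegrable (fun x => sigmaT x * (Ψ x μ) ^ 2) MeasureTheory.volume (-b) b :=
      (ContinuousOn.intervalIntegrable (by
        rw [uIcc_of_le hbb]; exact hsigmaT.mul (hcx.pow 2)))
    have int3 : IntervalIntegrable (fun x => (Ψ x μ) ^ 2) MeasureTheory.volume (-b) b :=
      (ContinuousOn.intervalIntegrable (by rw [uIcc_of_le hbb]; exact hcx.pow 2))
    -- FTC for the square
    have ftc : ∫ x in (-b)..b, 2 * (Ψx x μ * Ψ x μ) = (Ψ b μ) ^ 2 - (Ψ (-b) μ) ^ 2 := by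
      apply intervalIntegral.integral_eq_sub_of_hasDeriv_right_of_le hbb
      · rw [← uIcc_of_le hbb] at hcx ⊢
        exact hcx.pow 2
      · intro x hx
        have hmem : x ∈ Icc (-b) b := Ioo_subset_Icc_self hx
        have hd : HasDerivAt (fun t => Ψ t μ) (Ψx x μ) x :=
          (hderiv μ hμ x hmem).hasDerivAt (Icc_mem_nhds hx.1 hx.2)
        have : HasDerivAt (fun t => (Ψ t μ) ^ 2) (2 * (Ψx x μ * Ψ x μ)) x := by
          have e : (fun t => (Ψ t μ) ^ 2) = fun y => Ψ y μ * Ψ y μ := by funext t; ring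
          rw [e]
          rw [show 2 * (Ψx x μ * Ψ x μ) = Ψx x μ * Ψ x μ + Ψ x μ * Ψx x μ by ring]
          exact hd.mul hd
        exact this.hasDerivWithinAt
      · exact (int1.const_mul 2)
    have ftc' : ∫ x in (-b)..b, Ψx x μ * Ψ x μ = ((Ψ b μ) ^ 2 - (Ψ (-b) μ) ^ 2) / 2 := by
      have h2 : ∫ x in (-b)..b, 2 * (Ψx x μ * Ψ x μ)
          = 2 * ∫ x in (-b)..b, Ψx x μ * Ψ x μ := intervalIntegral.integral_const_mul _ _
      rw [h2] at ftc
      linarith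
    -- split the integral
    have split : F μ = μ * ((Ψ b μ) ^ 2 - (Ψ (-b) μ) ^ 2) / 2
        + ∫ x in (-b)..b, sigmaT x * (Ψ x μ) ^ 2 := by
      rw [hFeq μ hμ]
      have : (∫ x in (-b)..b, (μ * Ψx x μ + sigmaT x * Ψ x μ) * Ψ x μ)
          = ∫ x in (-b)..b, (μ * (Ψx x μ * Ψ x μ) + sigmaT x * (Ψ x μ) ^ 2) := by
        apply intervalIntegral.integral_congr; intro x _; ring
      rw [this, intervalIntegral.integral_add ((int1.const_mul μ)) int2,
        intervalIntegral.integral_const_mul, ftc']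
      ring
    -- boundary term nonneg
    have bnd : 0 ≤ μ * ((Ψ b μ) ^ 2 - (Ψ (-b) μ) ^ 2) / 2 := by
      rcases le_or_gt μ 0 with h | h
      · rw [hin₁ μ ⟨hμ.1, h⟩]
        nlinarith [sq_nonneg (Ψ (-b) μ)]
      · rw [hin₂ μ ⟨h.le, hμ.2⟩]
        nlinarith [sq_nonneg (Ψ b μ)]
    -- absorption
    have abs : σstar * K μ ≤ ∫ x in (-b)..b, sigmaT x * (Ψ x μ) ^ 2 := by
      rw [hKeq μ hμ, ← intervalIntegral.integral_const_mul]
      apply intervalIntegral.integral_mono_on hbb (int3.const_mul σstar) int2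
      intro x hx
      have := hlow x hx
      nlinarith [sq_nonneg (Ψ x μ)]
    linarith
  -- outer monotonicity
  have goalK : (∫ μ in (-1 : ℝ)..1, ∫ x in (-b)..b, (Ψ x μ) ^ 2)
      = ∫ μ in (-1 : ℝ)..1, K μ := by
    apply intervalIntegral.integral_congr
    intro μ hμ; rw [uIcc_of_le h11] at hμ; exact (hKeq μ hμ).symm
  have goalF : (∫ μ in (-1 : ℝ)..1, ∫ x in (-b)..b,
      (μ * Ψx x μ + sigmaT x * Ψ x μ) * Ψ x μ) = ∫ μ in (-1 : ℝ)..1, F μ := by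
    apply intervalIntegral.integral_congr
    intro μ hμ; rw [uIcc_of_le h11] at hμ; exact (hFeq μ hμ).symm
  rw [goalK, goalF, ← intervalIntegral.integral_const_mul]
  apply intervalIntegral.integral_mono_on h11
    ((continuous_const.mul hKc).intervalIntegrable _ _) (hFc.intervalIntegrable _ _)
  exact key
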